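/- Let (G_n) be the chain of graphs corresponding to an Inc-invariant chain of edge ideals with stability index r, with edges of G_n determined by: (k,l) ∈ E(G_n) iff (k,l) ∈ Δ((i,j), n-r) for some edge (i,j) of G_r with i < j ≤ r. Assume n ≥ 3r. If (k,l) is an edge of G_n with k < l, and k ≤ k' ≤ r and n - r ≤ l' ≤ l are integers, then both (k,l') and (k',l) are edges of G_n (short east and south moves). -/
import Mathlib


/-- `(k,l)` lies in the triangle `Δ((i,j), n-r)` for some edge `(i,j) ∈ E` of `G_r`,
i.e. `0 ≤ k - i ≤ l - j ≤ n - r` (written additively). -/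
def triRel (E : Set (ℕ × ℕ)) (r n k l : ℕ) : Prop :=
  ∃ q ∈ E, q.1 ≤ k ∧ k + q.2 ≤ l + q.1 ∧ l + r ≤ n + q.2

/-- The graph `G_n` of the invariant chain determined by the edge set `E` of `G_r`:
`(k,l)` with `k < l` is an edge of `G_n` iff `(k,l) ∈ Δ((i,j), n-r)` for some `(i,j) ∈ E`. -/
def chainGraph (E : Set (ℕ × ℕ)) (r n : ℕ) : SimpleGraph ℕ :=
  SimpleGraph.fromRel (triRel E r n)

/-- `E` is a set of edges `(i,j)` of a graph `G_r` on `{1,…,r}` with `i < j`. -/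
def goodEdges (E : Set (ℕ × ℕ)) (r : ℕ) : Prop :=
  ∀ q ∈ E, 1 ≤ q.1 ∧ q.1 < q.2 ∧ q.2 ≤ r

/-- Short east and short south moves: for `n ≥ 3r`, if `(k,l)` is an edge of `G_n` with
`k < l`, `k ≤ k' ≤ r` and `n - r ≤ l' ≤ l`, then `(k,l')` and `(k',l)` are edges of `G_n`. -/
theorem short_east_south_moves (E : Set (ℕ × ℕ)) (r n : ℕ) (hE : goodEdges E r)
    (hn : 3 * r ≤ n) (k l k' l' : ℕ) (hkl : k < l)
    (hadj : (chainGraph E r n).Adj k l)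
    (hk' : k ≤ k') (hk'r : k' ≤ r) (hl' : n - r ≤ l') (hl'l : l' ≤ l) :
    (chainGraph E r n).Adj k l' ∧ (chainGraph E r n).Adj k' l := by
  rw [chainGraph, SimpleGraph.fromRel_adj] at hadj
  obtain ⟨hne, hrel⟩ := hadj
  obtain ⟨q, hq, h1, h2, h3⟩ : triRel E r n k l := by
    rcases hrel with h | h
    · exact h
    · obtain ⟨q, hq, a, b, c⟩ := h
      obtain ⟨_, hlt, _⟩ := hE q hq
      exfalso; omega
  obtain ⟨h1r, hij, hjr⟩ := hE q hq
  constructor <;> rw [chainGraph, SimpleGraph.fromRel_adj]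
  · exact ⟨by omega, Or.inl ⟨q, hq, by omega, by omega, by omega⟩⟩
  · exact ⟨by omega, Or.inl ⟨q, hq, by omega, by omega, by omega⟩⟩
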